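/- arXiv:1512.07824 — 6 statements merged into one kernel-verified Lean document; each statement's English description precedes it below -/
import Mathlib

section
/- Let P, Q be nonzero coprime polynomials over a finite field F_q with deg P > deg Q. If s_0, ..., s_k are polynomials over F_q with deg s_i < deg P for all i, and the sum over i of s_i · (P/Q)^i equals 0 in the field of rational functions F_q(X), then s_i = 0 for all i. -/
open Polynomial

lemma pq_aux (Fq : Type*) [Field Fq] (P Q : Polynomial Fq) (hP : P ≠ 0)
    (hcop : IsCoprime P Q) :
    ∀ (k : ℕ) (s : ℕ → Polynomial Fq), (∀ i ≤ k, (s i).degree < P.degree) →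
    (∑ i ∈ Finset.range (k + 1), s i * P ^ i * Q ^ (k - i) = 0) → ∀ i ≤ k, s i = 0 := by
  intro k
  induction k with
  | zero =>
      intro s hs hE i hi
      interval_cases i
      simpa using hE
  | succ k ih =>
      intro s hs hE
      rw [Finset.sum_range_succ'] at hE
      have h0 : s 0 = 0 := by
        have hdvd : P ∣ s 0 * Q ^ (k + 1) := by
          have h1 : s 0 * Q ^ (k + 1) =
              -∑ i ∈ Finset.range (k + 1), s (i + 1) * P ^ (i + 1) * Q ^ (k + 1 - (i + 1)) := by
            have := hE
            simp only [pow_zero, mul_one, Nat.sub_zero] at this ⊢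
            linear_combination this
          rw [h1]
          apply dvd_neg.mpr
          apply Finset.dvd_sum
          intro i _
          exact ⟨s (i + 1) * P ^ i * Q ^ (k + 1 - (i + 1)), by ring⟩
        have hcop' : IsCoprime P (Q ^ (k + 1)) := hcop.pow_right
        have : P ∣ s 0 := hcop'.dvd_of_dvd_mul_right hdvd
        exact Polynomial.eq_zero_of_dvd_of_degree_lt this (hs 0 (by omega))
      have hE2 : P * ∑ i ∈ Finset.range (k + 1), s (i + 1) * P ^ i * Q ^ (k - i) = 0 := by
        rw [h0] at hE
        simp only [zero_mul, add_zero] at hE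
        rw [Finset.mul_sum]
        rw [← hE]
        apply Finset.sum_congr rfl
        intro i hi
        have : k + 1 - (i + 1) = k - i := by omega
        rw [this]; ring
      have hE3 : ∑ i ∈ Finset.range (k + 1), s (i + 1) * P ^ i * Q ^ (k - i) = 0 := by
        rcases mul_eq_zero.mp hE2 with h | h
        · exact absurd h hP
        · exact h
      have hrest := ih (fun i => s (i + 1)) (fun i hi => hs (i + 1) (by omega)) hE3
      intro i hi
      cases i with
      | zero => exact h0
      | succ j => exact hrest j (by omega)

/-- **Lemma (uniqueness of digits).** If `P, Q` are nonzero coprime polynomials over a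
finite field with `deg P > deg Q`, digits `s_0, …, s_k` have degree `< deg P`, and
`∑ s_i (P/Q)^i = 0` in the rational function field, then all `s_i = 0`. -/
theorem pq_digit_sum_eq_zero (Fq : Type*) [Field Fq] [Fintype Fq]
    (P Q : Polynomial Fq) (hP : P ≠ 0) (hQ : Q ≠ 0) (hcop : IsCoprime P Q)
    (hdeg : Q.degree < P.degree)
    (k : ℕ) (s : ℕ → Polynomial Fq) (hs : ∀ i ≤ k, (s i).degree < P.degree)
    (hsum : ∑ i ∈ Finset.range (k + 1),
      (algebraMap (Polynomial Fq) (RatFunc Fq) (s i)) *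
        ((algebraMap (Polynomial Fq) (RatFunc Fq) P) /
          (algebraMap (Polynomial Fq) (RatFunc Fq) Q)) ^ i = 0) :
    ∀ i ≤ k, s i = 0 := by
  have hQ' : (algebraMap (Polynomial Fq) (RatFunc Fq)) Q ≠ 0 := by
    simpa using hQ
  have key : ∑ i ∈ Finset.range (k + 1), s i * P ^ i * Q ^ (k - i) = 0 := by
    apply RatFunc.algebraMap_injective Fq
    rw [map_zero, map_sum]
    have h := congrArg (· * (algebraMap (Polynomial Fq) (RatFunc Fq) Q) ^ k) hsum
    simp only [Finset.sum_mul, zero_mul] at h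
    rw [← h]
    apply Finset.sum_congr rfl
    intro i hi
    have hik : i ≤ k := by
      have := Finset.mem_range.mp hi; omega
    rw [map_mul, map_mul, map_pow, map_pow]
    rw [div_pow, mul_assoc, mul_assoc]
    congr 1
    rw [div_mul_eq_mul_div, eq_div_iff (pow_ne_zero _ hQ')]
    have h2 : k - i + i = k := by omega
    rw [mul_assoc, ← pow_add, h2]
  exact pq_aux Fq P Q hP hcop k s hs key
end

section
/- Let P, Q be nonzero coprime polynomials over a finite field F_q with deg P > deg Q, and let D = {s ∈ F_q[X] : deg s < deg P}. Then every polynomial w ∈ F_q[X] admits a unique finite expansion w = Σ_{i=0}^{k} (s_i/Q)·(P/Q)^i with all s_i ∈ D (uniqueness meaning: two such expansions, after padding with zero digits, have equal digits). -/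
open Polynomial

section Aux

variable {Fq : Type*} [Field Fq]

/-- Field identity: rewrite the digit sum over a common denominator. -/
private lemma pq_sum_div_eq {K : Type*} [Field K] (p q : K) (hq : q ≠ 0)
    (a : ℕ → K) (k : ℕ) :
    ∑ i ∈ Finset.range (k + 1), (a i / q) * (p / q) ^ i
      = (∑ i ∈ Finset.range (k + 1), a i * p ^ i * q ^ (k - i)) / q ^ (k + 1) := by
  rw [Finset.sum_div]
  refine Finset.sum_congr rfl fun i hi => ?_
  rw [Finset.mem_range] at hi
  have h : k + 1 = (i + 1) + (k - i) := by omega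
  rw [h, pow_add, div_pow]
  field_simp
  ring

/-- Existence, polynomial form. -/
private lemma pq_exists_poly (P Q : Polynomial Fq) (hP : P ≠ 0) (hQ : Q ≠ 0)
    (hdeg : Q.degree < P.degree) (w : Polynomial Fq) :
    ∃ (s : ℕ → Polynomial Fq) (k : ℕ),
      (∀ i, (s i).degree < P.degree) ∧ (∀ i, k < i → s i = 0) ∧
      w * Q ^ (k + 1) = ∑ i ∈ Finset.range (k + 1), s i * P ^ i * Q ^ (k - i) := by
  have hPbot : (⊥ : WithBot ℕ) < P.degree := bot_lt_iff_ne_bot.mpr (degree_ne_bot.mpr hP)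
  suffices H : ∀ n (w : Polynomial Fq), w.natDegree < n →
      ∃ (s : ℕ → Polynomial Fq) (k : ℕ),
        (∀ i, (s i).degree < P.degree) ∧ (∀ i, k < i → s i = 0) ∧
        w * Q ^ (k + 1) = ∑ i ∈ Finset.range (k + 1), s i * P ^ i * Q ^ (k - i) by
    exact H (w.natDegree + 1) w (Nat.lt_succ_self _)
  intro n
  induction n with
  | zero => intro w hw; omega
  | succ n ih =>
    intro w hw
    by_cases hw0 : w = 0
    · exact ⟨fun _ => 0, 0, fun i => by simpa using hPbot, fun i _ => rfl, by simp [hw0]⟩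
    -- digit and quotient
    set s0 : Polynomial Fq := (w * Q) % P with hs0
    set w1 : Polynomial Fq := (w * Q) / P with hw1
    have hs0deg : s0.degree < P.degree := EuclideanDomain.mod_lt _ hP
    have hdiv : w * Q = P * w1 + s0 := (EuclideanDomain.div_add_mod (w * Q) P).symm
    by_cases hw10 : w1 = 0
    · refine ⟨fun i => if i = 0 then s0 else 0, 0, fun i => ?_,
        fun i hi => if_neg (by omega : ¬ i = 0), ?_⟩
      · by_cases h : i = 0
        · simpa [h] using hs0deg
        · simpa [h] using hPbot
      · have h2 : w * Q = s0 := by rw [hdiv, hw10, mul_zero, zero_add]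
        simpa using h2
    · -- degree decreases
      have hwdeg0 : (0 : WithBot ℕ) ≤ w.degree := zero_le_degree_iff.mpr hw0
      have hkey : w1.degree < w.degree := by
        have h1 : (P * w1).degree < w.degree + P.degree := by
          have he : P * w1 = w * Q - s0 := by rw [hdiv]; ring
          rw [he]
          refine lt_of_le_of_lt (degree_sub_le _ _) (max_lt ?_ ?_)
          · rw [degree_mul]
            exact WithBot.add_lt_add_left (degree_ne_bot.mpr hw0) hdeg
          · exact lt_of_lt_of_le hs0deg (le_add_of_nonneg_left hwdeg0)
        rw [degree_mul, add_comm] at h1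
        exact lt_of_add_lt_add_right h1
      have hnat : w1.natDegree < w.natDegree := natDegree_lt_natDegree hw10 hkey
      obtain ⟨s', k', hs'deg, hs'z, hs'eq⟩ := ih w1 (by omega)
      refine ⟨fun i => if i = 0 then s0 else s' (i - 1), k' + 1, fun i => ?_,
        fun i hi => ?_, ?_⟩
      · by_cases h : i = 0
        · simpa [h] using hs0deg
        · simpa [h] using hs'deg (i - 1)
      · have h : i ≠ 0 := by omega
        simp only [if_neg h]
        exact hs'z _ (by omega)
      · have hterm : ∀ i ∈ Finset.range (k' + 1),
            (if i + 1 = 0 then s0 else s' (i + 1 - 1)) * P ^ (i + 1) * Q ^ (k' + 1 - (i + 1))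
              = P * (s' i * P ^ i * Q ^ (k' - i)) := by
          intro i _
          have h1 : i + 1 ≠ 0 := Nat.succ_ne_zero i
          have h2 : k' + 1 - (i + 1) = k' - i := by omega
          rw [if_neg h1, Nat.add_sub_cancel, h2, pow_succ]
          ring
        rw [Finset.sum_range_succ', Finset.sum_congr rfl hterm, ← Finset.mul_sum, ← hs'eq]
        beta_reduce
        rw [if_pos (rfl : (0 : ℕ) = 0)]
        simp only [Nat.sub_zero, pow_zero, one_mul, mul_one]
        linear_combination Q ^ (k' + 1) * hdiv

/-- Uniqueness core: a vanishing digit combination has all digits zero. -/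
private lemma pq_digits_zero (P Q : Polynomial Fq) (hP : P ≠ 0) (hcop : IsCoprime P Q) :
    ∀ (n : ℕ) (d : ℕ → Polynomial Fq), (∀ i, (d i).degree < P.degree) →
      (∑ i ∈ Finset.range n, d i * P ^ i * Q ^ (n - 1 - i)) = 0 → ∀ i < n, d i = 0 := by
  intro n
  induction n with
  | zero => intro d _ _ i hi; omega
  | succ n ih =>
    intro d hd heq i hi
    rw [Finset.sum_range_succ'] at heq
    have hterm : ∀ j ∈ Finset.range n,
        d (j + 1) * P ^ (j + 1) * Q ^ (n + 1 - 1 - (j + 1))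
          = P * (d (j + 1) * P ^ j * Q ^ (n - 1 - j)) := by
      intro j _
      have h2 : n + 1 - 1 - (j + 1) = n - 1 - j := by omega
      rw [h2, pow_succ]; ring
    rw [Finset.sum_congr rfl hterm, ← Finset.mul_sum] at heq
    have h0 : n + 1 - 1 - 0 = n := by omega
    rw [h0, pow_zero] at heq
    set S := ∑ j ∈ Finset.range n, d (j + 1) * P ^ j * Q ^ (n - 1 - j) with hS
    -- heq : P * S + d 0 * 1 * Q ^ n = 0
    have hd0 : d 0 = 0 := by
      have hdvd : P ∣ d 0 * Q ^ n := ⟨-S, by linear_combination heq⟩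
      have hdvd0 : P ∣ d 0 := (hcop.pow_right).dvd_of_dvd_mul_right hdvd
      by_contra h
      exact absurd (degree_le_of_dvd hdvd0 h) (not_le_of_gt (hd 0))
    have hSz : S = 0 := by
      rw [hd0] at heq
      simp only [zero_mul, mul_zero, one_mul, add_zero] at heq
      rcases mul_eq_zero.mp heq with h | h
      · exact absurd h hP
      · exact h
    rcases i with _ | j
    · exact hd0
    · exact ih (fun j => d (j + 1)) (fun j => hd (j + 1)) (by rw [← hS]; exact hSz) j (by omega)

/-- Padding: a representation with bound `k` also holds with any larger bound. -/
private lemma pq_pad (P Q w : Polynomial Fq) (s : ℕ → Polynomial Fq) (k k' : ℕ)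
    (hkk' : k ≤ k') (hz : ∀ i, k < i → s i = 0)
    (h : w * Q ^ (k + 1) = ∑ i ∈ Finset.range (k + 1), s i * P ^ i * Q ^ (k - i)) :
    w * Q ^ (k' + 1) = ∑ i ∈ Finset.range (k' + 1), s i * P ^ i * Q ^ (k' - i) := by
  have hsub : Finset.range (k + 1) ⊆ Finset.range (k' + 1) :=
    Finset.range_subset_range.mpr (by omega)
  have h2 : ∑ i ∈ Finset.range (k' + 1), s i * P ^ i * Q ^ (k' - i)
      = ∑ i ∈ Finset.range (k + 1), s i * P ^ i * Q ^ (k' - i) := by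
    refine (Finset.sum_subset hsub fun x hx hxk => ?_).symm
    rw [Finset.mem_range] at hx
    rw [Finset.mem_range] at hxk
    rw [hz x (by omega)]; ring
  have h3 : ∀ i ∈ Finset.range (k + 1),
      s i * P ^ i * Q ^ (k' - i) = (s i * P ^ i * Q ^ (k - i)) * Q ^ (k' - k) := by
    intro i hi
    rw [Finset.mem_range] at hi
    have : k' - i = (k - i) + (k' - k) := by omega
    rw [this, pow_add]; ring
  rw [h2, Finset.sum_congr rfl h3, ← Finset.sum_mul, ← h, mul_assoc, ← pow_add]
  congr 2
  omega

/-- Bridge between the rational-function statement and the polynomial statement. -/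
private lemma pq_bridge (P Q : Polynomial Fq) (hQ : Q ≠ 0) (w : Polynomial Fq)
    (s : ℕ → Polynomial Fq) (k : ℕ) :
    (algebraMap (Polynomial Fq) (RatFunc Fq) w =
      ∑ i ∈ Finset.range (k + 1),
        (algebraMap (Polynomial Fq) (RatFunc Fq) (s i) /
          algebraMap (Polynomial Fq) (RatFunc Fq) Q) *
        ((algebraMap (Polynomial Fq) (RatFunc Fq) P) /
          (algebraMap (Polynomial Fq) (RatFunc Fq) Q)) ^ i)
    ↔ w * Q ^ (k + 1) = ∑ i ∈ Finset.range (k + 1), s i * P ^ i * Q ^ (k - i) := by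
  set f := algebraMap (Polynomial Fq) (RatFunc Fq) with hf
  have hfQ : f Q ≠ 0 := by
    simpa [hf] using (map_ne_zero_iff f (RatFunc.algebraMap_injective Fq)).mpr hQ
  rw [pq_sum_div_eq (f P) (f Q) hfQ (fun i => f (s i)) k]
  have hsum : ∑ i ∈ Finset.range (k + 1), f (s i) * f P ^ i * f Q ^ (k - i)
      = f (∑ i ∈ Finset.range (k + 1), s i * P ^ i * Q ^ (k - i)) := by
    rw [map_sum]
    exact Finset.sum_congr rfl fun i _ => by rw [map_mul, map_mul, map_pow, map_pow]
  rw [hsum, eq_div_iff (pow_ne_zero _ hfQ), ← map_pow, ← map_mul]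
  exact ⟨fun h => RatFunc.algebraMap_injective Fq h, fun h => by rw [h]⟩

end Aux

/-- **Theorem (existence and uniqueness of `P/Q`-polynomial digit expansions).**
Every `w ∈ F_q[X]` has a unique expansion `w = ∑_{i=0}^k (s_i/Q)(P/Q)^i` with digits
`s_i` of degree `< deg P` (uniqueness up to padding with zero digits, so the digit
string is recorded as a function `ℕ → F_q[X]` vanishing beyond some index `k`). -/
theorem pq_polynomial_digit_expansion (Fq : Type*) [Field Fq] [Fintype Fq]
    (P Q : Polynomial Fq) (hP : P ≠ 0) (hQ : Q ≠ 0) (hcop : IsCoprime P Q)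
    (hdeg : Q.degree < P.degree) (w : Polynomial Fq) :
    ∃! s : ℕ → Polynomial Fq,
      (∀ i, (s i).degree < P.degree) ∧
      ∃ k : ℕ, (∀ i, k < i → s i = 0) ∧
        algebraMap (Polynomial Fq) (RatFunc Fq) w =
          ∑ i ∈ Finset.range (k + 1),
            (algebraMap (Polynomial Fq) (RatFunc Fq) (s i) /
              algebraMap (Polynomial Fq) (RatFunc Fq) Q) *
            ((algebraMap (Polynomial Fq) (RatFunc Fq) P) /
              (algebraMap (Polynomial Fq) (RatFunc Fq) Q)) ^ i := by
  obtain ⟨s, k, hsdeg, hsz, hseq⟩ := pq_exists_poly P Q hP hQ hdeg w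
  refine ⟨s, ⟨hsdeg, k, hsz, (pq_bridge P Q hQ w s k).mpr hseq⟩, ?_⟩
  rintro t ⟨htdeg, k', htz, hteq⟩
  rw [pq_bridge P Q hQ w t k'] at hteq
  -- pad both to a common bound K
  set K := max k k' with hK
  have hs' := pq_pad P Q w s k K (le_max_left _ _) hsz hseq
  have ht' := pq_pad P Q w t k' K (le_max_right _ _) htz hteq
  have hdiff : ∑ i ∈ Finset.range (K + 1), (t i - s i) * P ^ i * Q ^ (K + 1 - 1 - i) = 0 := by
    have : ∀ i ∈ Finset.range (K + 1), (t i - s i) * P ^ i * Q ^ (K + 1 - 1 - i)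
        = t i * P ^ i * Q ^ (K - i) - s i * P ^ i * Q ^ (K - i) := by
      intro i _
      have : K + 1 - 1 - i = K - i := by omega
      rw [this]; ring
    rw [Finset.sum_congr rfl this, Finset.sum_sub_distrib, ← ht', ← hs', sub_self]
  have hz := pq_digits_zero P Q hP hcop (K + 1)
    (fun i => t i - s i)
    (fun i => lt_of_le_of_lt (degree_sub_le _ _) (max_lt (htdeg i) (hsdeg i)))
    hdiff
  funext i
  by_cases hi : i < K + 1
  · have := hz i hi
    exact sub_eq_zero.mp this
  · rw [htz i (by omega), hsz i (by omega)]
end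

section
/- Let P, Q be nonzero coprime polynomials over F_q with deg P > deg Q, let v, w ∈ F_q[X], and let k ≥ 1. If there exists a digit string s_{k-1}, ..., s_0 (each s_i of degree < deg P) such that both (P/Q)^k·v + Σ_{i=0}^{k-1}(s_i/Q)(P/Q)^i and (P/Q)^k·w + Σ_{i=0}^{k-1}(s_i/Q)(P/Q)^i are polynomials, then v ≡ w mod Q^k. -/
open Polynomial

/-- **Lemma (common continuations force congruence mod `Q^k`).** If some digit string
`s_{k-1}, …, s_0` (digits of degree `< deg P`) makes both
`(P/Q)^k v + ∑_{i<k} (s_i/Q)(P/Q)^i` and `(P/Q)^k w + ∑_{i<k} (s_i/Q)(P/Q)^i`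
polynomials, then `v ≡ w (mod Q^k)`. -/
theorem pq_common_continuation_congruence (Fq : Type*) [Field Fq] [Fintype Fq]
    (P Q : Polynomial Fq) (hP : P ≠ 0) (hQ : Q ≠ 0) (hcop : IsCoprime P Q)
    (hdeg : Q.degree < P.degree) (v w : Polynomial Fq) (k : ℕ) (hk : 1 ≤ k)
    (s : ℕ → Polynomial Fq) (hs : ∀ i < k, (s i).degree < P.degree)
    (hv : ∃ a : Polynomial Fq, algebraMap (Polynomial Fq) (RatFunc Fq) a =
      ((algebraMap (Polynomial Fq) (RatFunc Fq) P) /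
        (algebraMap (Polynomial Fq) (RatFunc Fq) Q)) ^ k *
          algebraMap (Polynomial Fq) (RatFunc Fq) v +
        ∑ i ∈ Finset.range k,
          (algebraMap (Polynomial Fq) (RatFunc Fq) (s i) /
            algebraMap (Polynomial Fq) (RatFunc Fq) Q) *
          ((algebraMap (Polynomial Fq) (RatFunc Fq) P) /
            (algebraMap (Polynomial Fq) (RatFunc Fq) Q)) ^ i)
    (hw : ∃ b : Polynomial Fq, algebraMap (Polynomial Fq) (RatFunc Fq) b =
      ((algebraMap (Polynomial Fq) (RatFunc Fq) P) /
        (algebraMap (Polynomial Fq) (RatFunc Fq) Q)) ^ k *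
          algebraMap (Polynomial Fq) (RatFunc Fq) w +
        ∑ i ∈ Finset.range k,
          (algebraMap (Polynomial Fq) (RatFunc Fq) (s i) /
            algebraMap (Polynomial Fq) (RatFunc Fq) Q) *
          ((algebraMap (Polynomial Fq) (RatFunc Fq) P) /
            (algebraMap (Polynomial Fq) (RatFunc Fq) Q)) ^ i) :
    Q ^ k ∣ v - w := by
  obtain ⟨a, ha⟩ := hv
  obtain ⟨b, hb⟩ := hw
  set f := algebraMap (Polynomial Fq) (RatFunc Fq) with hf
  have hQ0 : f Q ≠ 0 := by
    simpa [hf] using (RatFunc.algebraMap_ne_zero hQ)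
  have key : f (Q ^ k * (a - b)) = f (P ^ k * (v - w)) := by
    have h1 : f a - f b = (f P / f Q) ^ k * (f v - f w) := by
      rw [ha, hb]; ring
    have h2 : f Q ^ k * (f a - f b) = f P ^ k * (f v - f w) := by
      rw [h1, div_pow, ← mul_assoc, mul_div_cancel₀ _ (pow_ne_zero k hQ0)]
    simpa [map_mul, map_pow, map_sub] using h2
  have hpoly : Q ^ k * (a - b) = P ^ k * (v - w) :=
    (RatFunc.algebraMap_injective Fq) key
  have hdvd : Q ^ k ∣ P ^ k * (v - w) := ⟨a - b, hpoly.symm⟩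
  exact (hcop.symm.pow).dvd_of_dvd_mul_left hdvd
end

section
/- Let P, Q be nonzero coprime polynomials over F_q with deg P > deg Q ≥ 1, a ∈ D*, and b ∈ D* of length ℓ > 0. If π(a b^n) ∈ F_q[X] for all n ∈ ℕ, then Q^{(n-1)ℓ} divides π(ab) − π(a) in F_q[X] for every n ≥ 1. -/
open Polynomial

/-- Evaluation map `π` of a digit word `s_k ⋯ s_0` (given as a list with the most
significant digit first): `π(s_k ⋯ s_0) = ∑_{i=0}^k (s_i/Q)(P/Q)^i ∈ F_q(X)`. -/
noncomputable def piEval {Fq : Type*} [Field Fq] (P Q : Polynomial Fq)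
    (L : List (Polynomial Fq)) : RatFunc Fq :=
  ∑ i ∈ Finset.range L.length,
    (algebraMap (Polynomial Fq) (RatFunc Fq) (L.reverse.getD i 0) /
      algebraMap (Polynomial Fq) (RatFunc Fq) Q) *
    ((algebraMap (Polynomial Fq) (RatFunc Fq) P) /
      (algebraMap (Polynomial Fq) (RatFunc Fq) Q)) ^ i

/-- Splitting of `piEval` along a word concatenation: the prefix gets shifted by
`(P/Q)^(length of the suffix)`. -/
lemma piEval_append {Fq : Type*} [Field Fq] (P Q : Polynomial Fq)
    (a w : List (Polynomial Fq)) :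
    piEval P Q (a ++ w) = piEval P Q w +
      ((algebraMap (Polynomial Fq) (RatFunc Fq) P) /
        (algebraMap (Polynomial Fq) (RatFunc Fq) Q)) ^ w.length * piEval P Q a := by
  unfold piEval
  rw [List.length_append, add_comm a.length w.length, Finset.sum_range_add,
    Finset.mul_sum]
  congr 1
  · apply Finset.sum_congr rfl
    intro i hi
    rw [List.reverse_append, List.getD_append _ _ _ _ (by simpa using Finset.mem_range.mp hi)]
  · apply Finset.sum_congr rfl
    intro i hi
    rw [List.reverse_append, List.getD_append_right _ _ _ _ (by simp), pow_add]
    simp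
    ring

/-- **Lemma (divisibility along periodic tails).** If `π(a b^n) ∈ F_q[X]` for all `n`,
with `b` of length `ℓ > 0`, then `Q^((n-1)ℓ)` divides `π(ab) - π(a)` in `F_q[X]`
for every `n ≥ 1` (here `π(ab)` and `π(a)` are the polynomials representing these
rational functions). -/
theorem pq_periodic_tail_divisibility (Fq : Type*) [Field Fq] [Fintype Fq]
    (P Q : Polynomial Fq) (hP : P ≠ 0) (hQ : Q ≠ 0) (hcop : IsCoprime P Q)
    (hdeg : Q.degree < P.degree) (hQdeg : 1 ≤ Q.degree)
    (a b : List (Polynomial Fq))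
    (ha : ∀ x ∈ a, x.degree < P.degree) (hb : ∀ x ∈ b, x.degree < P.degree)
    (hbne : b ≠ [])
    (hpoly : ∀ n : ℕ, ∃ w : Polynomial Fq,
      algebraMap (Polynomial Fq) (RatFunc Fq) w =
        piEval P Q (a ++ (List.replicate n b).flatten)) :
    ∀ n : ℕ, 1 ≤ n → ∀ wab wa : Polynomial Fq,
      algebraMap (Polynomial Fq) (RatFunc Fq) wab = piEval P Q (a ++ b) →
      algebraMap (Polynomial Fq) (RatFunc Fq) wa = piEval P Q a →
      Q ^ ((n - 1) * b.length) ∣ wab - wa := by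
  intro n hn wab wa hwab hwa
  set F := algebraMap (Polynomial Fq) (RatFunc Fq) with hF
  have hFinj : Function.Injective F := RatFunc.algebraMap_injective Fq
  set k := n - 1 with hk
  set ℓ := b.length with hℓ
  set w := (List.replicate k b).flatten with hw
  have hwlen : w.length = k * ℓ := by
    simp [hw, List.length_flatten, List.map_replicate, hℓ, mul_comm]
  obtain ⟨u, hu⟩ := hpoly k
  obtain ⟨v, hv⟩ := hpoly (k + 1)
  have hflat : (List.replicate (k+1) b).flatten = b ++ w := by
    simp [hw, List.replicate_succ]
  have hv' : F v = piEval P Q ((a ++ b) ++ w) := by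
    rw [hv, hflat, List.append_assoc]
  have hQ0 : F Q ≠ 0 := fun h => hQ (hFinj (by simpa using h))
  rw [piEval_append, hwlen, ← hwab] at hv'
  have hu' : F u = piEval P Q w + (F P / F Q) ^ (k * ℓ) * F wa := by
    rw [hu, ← hw, piEval_append, hwlen, ← hwa]
  have key : F v - F u = (F P / F Q) ^ (k * ℓ) * (F wab - F wa) := by
    rw [hv', hu']; ring
  have key2 : F (Q ^ (k * ℓ) * (v - u)) = F (P ^ (k * ℓ) * (wab - wa)) := by
    simp only [map_mul, map_sub, map_pow]
    rw [key, div_pow]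
    field_simp
  have key3 : Q ^ (k * ℓ) * (v - u) = P ^ (k * ℓ) * (wab - wa) := hFinj key2
  have hdvd : Q ^ (k * ℓ) ∣ P ^ (k * ℓ) * (wab - wa) := ⟨v - u, key3.symm⟩
  exact (hcop.symm.pow).dvd_of_dvd_mul_left hdvd
end

section
/- Let P, Q be nonzero coprime polynomials over F_q with m = deg P > n = deg Q. Let v ∈ F_q[X] and let β ∈ F_q((X^{-1})) with deg β < m. Then there exists a unique digit s ∈ L(v) = {s : deg s < m, s ≡ −P·v mod Q} such that deg(β − s) < n. -/
open Polynomial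

/-- Embedding of `F_q[X]` into the field `F_q((X⁻¹))`, modelled as Laurent series
(`HahnSeries ℤ Fq`) in the variable `t = X⁻¹`: the monomial `X^i` is sent to `t^{-i}`,
i.e. to `HahnSeries.single (-i) 1`. -/
noncomputable def polyToLS {Fq : Type*} [Field Fq] (p : Polynomial Fq) :
    LaurentSeries Fq :=
  ∑ i ∈ p.support, HahnSeries.single (-(i : ℤ)) (p.coeff i)

lemma polyToLS_coeff {Fq : Type*} [Field Fq] (p : Polynomial Fq) (j : ℕ) :
    (polyToLS p).coeff (-(j : ℤ)) = p.coeff j := by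
  unfold polyToLS
  have hsum : (∑ i ∈ p.support, HahnSeries.single (-(i : ℤ)) (p.coeff i)).coeff (-(j : ℤ)) =
      ∑ i ∈ p.support, (HahnSeries.single (-(i : ℤ)) (p.coeff i)).coeff (-(j : ℤ)) :=
    map_sum (HahnSeries.coeff.addMonoidHom (-(j : ℤ))) _ _
  rw [hsum]
  simp only [HahnSeries.coeff_single]
  rw [Finset.sum_eq_single j]
  · simp
  · intro i _ hij
    simp [show ¬(-(j:ℤ) = -(i:ℤ)) by exact_mod_cast fun h => hij (by omega)]
  · intro h
    simp [Polynomial.notMem_support_iff.mp h]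

/-- **Lemma (unique digit matching a Laurent series prefix).** Let `m = deg P > n = deg Q`,
`v ∈ F_q[X]` and let `β ∈ F_q((X⁻¹))` have degree `< m` (no terms `X^j` with `j ≥ m`,
i.e. the coefficient of `t^e` vanishes for `e ≤ -m`). Then there is a unique digit
`s ∈ L(v)` (i.e. `deg s < m` and `s ≡ -P·v (mod Q)`) with `deg (β - s) < n`. -/
theorem pq_unique_digit_for_prefix (Fq : Type*) [Field Fq] [Fintype Fq]
    (P Q : Polynomial Fq) (hP : P ≠ 0) (hQ : Q ≠ 0) (hcop : IsCoprime P Q)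
    (hdeg : Q.degree < P.degree) (v : Polynomial Fq)
    (β : LaurentSeries Fq) (hβ : ∀ e : ℤ, e ≤ -(P.natDegree : ℤ) → β.coeff e = 0) :
    ∃! s : Polynomial Fq,
      (s.degree < P.degree ∧ Q ∣ P * v + s) ∧
        ∀ e : ℤ, e ≤ -(Q.natDegree : ℤ) → (β - polyToLS s).coeff e = 0 := by
  set m := P.natDegree with hm
  set n := Q.natDegree with hn
  have hPdeg : P.degree = (m : ℕ) := (Polynomial.degree_eq_natDegree hP)
  have hQdeg : Q.degree = (n : ℕ) := (Polynomial.degree_eq_natDegree hQ)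
  -- the "high part", determined by β
  set h : Polynomial Fq :=
    ∑ j ∈ Finset.Ico n m, Polynomial.monomial j (β.coeff (-(j : ℤ))) with hh
  have hcoeff : ∀ k : ℕ, h.coeff k = if k ∈ Finset.Ico n m then β.coeff (-(k : ℤ)) else 0 := by
    intro k
    rw [hh, Polynomial.finset_sum_coeff]
    simp only [Polynomial.coeff_monomial]
    rw [Finset.sum_ite_eq' (Finset.Ico n m) k fun j => β.coeff (-(j : ℤ))]
  -- normalized Q
  set Q₁ : Polynomial Fq := Q * Polynomial.C Q.leadingCoeff⁻¹ with hQ₁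
  have hQ₁monic : Q₁.Monic := Polynomial.monic_mul_leadingCoeff_inv hQ
  have hQ₁deg : Q₁.degree = Q.degree := Polynomial.degree_mul_leadingCoeff_inv _ hQ
  have hQdvdQ₁ : Q ∣ Q₁ := Dvd.intro _ rfl
  set r : Polynomial Fq := (-(P * v + h)) %ₘ Q₁ with hr
  have hrdeg : r.degree < Q.degree := by
    rw [← hQ₁deg]; exact Polynomial.degree_modByMonic_lt _ hQ₁monic
  set s : Polynomial Fq := h + r with hs
  -- key coefficient facts about s
  have hscoeff : ∀ k : ℕ, n ≤ k → s.coeff k = β.coeff (-(k : ℤ)) := by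
    intro k hk
    have hrk : r.coeff k = 0 := by
      apply Polynomial.coeff_eq_zero_of_degree_lt
      exact lt_of_lt_of_le hrdeg (by rw [hQdeg]; exact_mod_cast hk)
    rw [hs, Polynomial.coeff_add, hrk, add_zero, hcoeff k]
    by_cases hkm : k < m
    · simp [Finset.mem_Ico, hk, hkm]
    · rw [if_neg (by simp [Finset.mem_Ico]; omega)]
      exact (hβ (-(k : ℤ)) (by omega)).symm
  have hsdvd : Q ∣ P * v + s := by
    apply dvd_trans hQdvdQ₁
    have h1 := Polynomial.modByMonic_eq_sub_mul_div (-(P * v + h)) Q₁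
    have h2 : P * v + s = Q₁ * (-(-(P * v + h) /ₘ Q₁)) := by
      rw [hs, hr, h1]; ring
    exact Dvd.intro _ h2.symm
  refine ⟨s, ⟨⟨?_, hsdvd⟩, ?_⟩, ?_⟩
  · -- degree s < degree P
    rw [hPdeg, Polynomial.degree_lt_iff_coeff_zero]
    intro k hk
    have hk' : m ≤ k := by exact_mod_cast hk
    have hnk : n ≤ k := le_trans (by
      have := Polynomial.natDegree_lt_natDegree_iff hQ |>.mpr hdeg
      omega) hk'
    rw [hscoeff k hnk]
    exact hβ (-(k : ℤ)) (by omega)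
  · -- prefix condition
    intro e he
    obtain ⟨k, rfl⟩ : ∃ k : ℕ, e = -(k : ℤ) := ⟨(-e).toNat, by omega⟩
    have hk : n ≤ k := by omega
    rw [HahnSeries.coeff_sub, polyToLS_coeff, hscoeff k hk, sub_self]
  · -- uniqueness
    rintro s' ⟨⟨hs'deg, hs'dvd⟩, hs'pre⟩
    have hcoeq : ∀ k : ℕ, n ≤ k → s'.coeff k = s.coeff k := by
      intro k hk
      have := hs'pre (-(k : ℤ)) (by omega)
      rw [HahnSeries.coeff_sub, polyToLS_coeff, sub_eq_zero] at this
      rw [← this, hscoeff k hk]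
    have hdiffdeg : (s' - s).degree < Q.degree := by
      rw [hQdeg, Polynomial.degree_lt_iff_coeff_zero]
      intro k hk
      have hk' : n ≤ k := by exact_mod_cast hk
      rw [Polynomial.coeff_sub, hcoeq k hk', sub_self]
    have hdvd : Q ∣ s' - s := by
      have heq : s' - s = (P * v + s') - (P * v + s) := by ring
      rw [heq]; exact dvd_sub hs'dvd hsdvd
    have := Polynomial.eq_zero_of_dvd_of_degree_lt hdvd hdiffdeg
    linear_combination (norm := ring_nf) this
end

section
/- Let P, Q be nonzero coprime polynomials over F_q with deg P > deg Q ≥ 1. For w ∈ F_q[X] and k ∈ ℕ define R_k(w) as the set of length-k digit strings s (over D = {s : deg s < deg P}) such that (P/Q)^k·w + π(s) ∈ F_q[X], where π(s_{k-1}⋯s_0) = Σ (s_i/Q)(P/Q)^i. Then R_k(w) is nonempty for every w and k, and |R_k(w)| = q^{k(deg P − deg Q)}. -/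
open Polynomial

namespace PQCont

section
variable {Fq : Type*} [Field Fq] (P Q : Polynomial Fq)

/-- The numerator polynomial: the expansion expression multiplied by `Q^k`. -/
noncomputable def NN (k : ℕ) (w : Polynomial Fq) (s : Fin k → Polynomial Fq) : Polynomial Fq :=
  P ^ k * w + ∑ i : Fin k, s i * (P ^ (i : ℕ) * Q ^ (k - 1 - (i : ℕ)))

/-- Solutions: digit strings of length `k` continuing `w`. -/
def Sol (k : ℕ) (w : Polynomial Fq) :=
  {s : Fin k → Polynomial Fq // (∀ i, (s i).degree < P.degree) ∧ Q ^ k ∣ NN P Q k w s}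

/-- Admissible next digits. -/
def Dig (w : Polynomial Fq) := {d : Polynomial Fq // d.degree < P.degree ∧ Q ∣ P * w + d}

variable {P Q}

lemma finite_degreeLT [Finite Fq] (n : ℕ) : Finite ↥(degreeLT Fq n) :=
  Finite.of_equiv _ (degreeLTEquiv Fq n).toEquiv.symm

lemma finite_sol [Finite Fq] (hP : P ≠ 0) (k : ℕ) (w : Polynomial Fq) : Finite (Sol P Q k w) := by
  have : Finite ↥(degreeLT Fq P.natDegree) := finite_degreeLT _
  refine Finite.of_injective (fun s : Sol P Q k w => fun i =>
    (⟨s.1 i, mem_degreeLT.mpr (by rw [← degree_eq_natDegree hP]; exact s.2.1 i)⟩ :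
      ↥(degreeLT Fq P.natDegree))) ?_
  intro a b h
  apply Subtype.ext; funext i
  exact congrArg Subtype.val (congrFun h i)

lemma card_degreeLT [Fintype Fq] (n : ℕ) :
    Nat.card ↥(degreeLT Fq n) = Fintype.card Fq ^ n := by
  rw [Nat.card_congr (degreeLTEquiv Fq n).toEquiv]
  simp [Nat.card_eq_fintype_card]

noncomputable def digEquiv (hQ : Q ≠ 0) (hdeg : Q.degree < P.degree) (w : Polynomial Fq) :
    ↥(Polynomial.degreeLT Fq (P.natDegree - Q.natDegree)) ≃ Dig P Q w := by
  classical
  have hP : P ≠ 0 := by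
    rintro rfl
    rw [degree_zero] at hdeg
    exact not_lt_bot hdeg
  have hnn : Q.natDegree < P.natDegree := natDegree_lt_natDegree hQ hdeg
  set r : Polynomial Fq := (-(P * w)) % Q with hrdef
  have hr : r.degree < Q.degree := EuclideanDomain.mod_lt _ hQ
  have hmod : Q * ((-(P * w)) / Q) + r = -(P * w) := EuclideanDomain.div_add_mod _ _
  have hdivr : Q ∣ P * w + r := ⟨-((-(P * w)) / Q), by linear_combination hmod⟩
  have hdegP : P.degree = (P.natDegree : WithBot ℕ) := degree_eq_natDegree hP
  have hdegQ : Q.degree = (Q.natDegree : WithBot ℕ) := degree_eq_natDegree hQ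
  refine
    { toFun := fun t => ⟨r + Q * t.1, ?_, ?_⟩
      invFun := fun d => ⟨(d.1 - r) / Q, ?_⟩
      left_inv := ?_, right_inv := ?_ }
  · refine lt_of_le_of_lt (degree_add_le _ _) (max_lt (hr.trans hdeg) ?_)
    rcases eq_or_ne (t.1 : Polynomial Fq) 0 with h0 | h0
    · rw [h0, mul_zero, degree_zero, hdegP]
      exact WithBot.bot_lt_coe _
    · have ht := mem_degreeLT.mp t.2
      have hdt : (t.1 : Polynomial Fq).degree = ((t.1 : Polynomial Fq).natDegree : WithBot ℕ) :=
        degree_eq_natDegree h0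
      rw [degree_mul, hdegQ, hdt, hdegP, ← Nat.cast_add, Nat.cast_lt]
      rw [hdt, Nat.cast_lt] at ht
      omega
  · obtain ⟨c, hc⟩ := hdivr
    exact ⟨c + t.1, by linear_combination hc⟩
  · have hdvd : Q ∣ d.1 - r := by
      have h := dvd_sub d.2.2 hdivr
      have he : (P * w + d.1) - (P * w + r) = d.1 - r := by ring
      rwa [he] at h
    have hc : Q * ((d.1 - r) / Q) = d.1 - r := EuclideanDomain.mul_div_cancel' hQ hdvd
    rw [mem_degreeLT]
    rcases eq_or_ne ((d.1 - r) / Q) 0 with h0 | h0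
    · rw [h0, degree_zero]; exact WithBot.bot_lt_coe _
    · have hsub : d.1 - r ≠ 0 := by
        rw [← hc]; exact mul_ne_zero hQ h0
      have hds : (d.1 - r).degree < P.degree :=
        lt_of_le_of_lt (degree_sub_le _ _) (max_lt d.2.1 (hr.trans hdeg))
      have h2 : (d.1 - r).degree = ((Q.natDegree + ((d.1 - r) / Q).natDegree : ℕ) : WithBot ℕ) := by
        calc (d.1 - r).degree = (Q * ((d.1 - r) / Q)).degree := by rw [hc]
          _ = _ := by rw [degree_mul, hdegQ, degree_eq_natDegree h0, Nat.cast_add]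
      have hds2 : Q.natDegree + ((d.1 - r) / Q).natDegree < P.natDegree := by
        have h3 : ((Q.natDegree + ((d.1 - r) / Q).natDegree : ℕ) : WithBot ℕ) <
            (P.natDegree : WithBot ℕ) := by
          rw [← h2]; exact hds.trans_eq hdegP
        exact_mod_cast h3
      rw [degree_eq_natDegree h0, Nat.cast_lt]
      omega
  · intro t
    apply Subtype.ext
    show (r + Q * t.1 - r) / Q = t.1
    rw [add_sub_cancel_left, mul_div_cancel_left₀ _ hQ]
  · intro d
    apply Subtype.ext
    show r + Q * ((d.1 - r) / Q) = d.1
    have hdvd : Q ∣ d.1 - r := by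
      have h := dvd_sub d.2.2 hdivr
      have he : (P * w + d.1) - (P * w + r) = d.1 - r := by ring
      rwa [he] at h
    rw [EuclideanDomain.mul_div_cancel' hQ hdvd]; ring

lemma NN_snoc (k : ℕ) (w d : Polynomial Fq) (s : Fin k → Polynomial Fq) :
    NN P Q (k + 1) w (Fin.snoc s d) =
      P ^ k * (P * w + d) + Q * ∑ i : Fin k, s i * (P ^ (i : ℕ) * Q ^ (k - 1 - (i : ℕ))) := by
  unfold NN
  rw [Fin.sum_univ_castSucc]
  simp only [Fin.snoc_castSucc, Fin.snoc_last, Fin.coe_castSucc, Fin.val_last]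
  rw [Finset.mul_sum]
  have hterm : ∀ i : Fin k,
      s i * (P ^ (i : ℕ) * Q ^ (k + 1 - 1 - (i : ℕ))) =
        Q * (s i * (P ^ (i : ℕ) * Q ^ (k - 1 - (i : ℕ)))) := by
    intro i
    have hi := i.isLt
    have he : k + 1 - 1 - (i : ℕ) = (k - 1 - (i : ℕ)) + 1 := by omega
    rw [he, pow_succ]
    ring
  rw [Finset.sum_congr rfl (fun i _ => hterm i)]
  have h0 : k + 1 - 1 - k = 0 := by omega
  rw [h0]
  ring

lemma cond_snoc (hQ : Q ≠ 0) {k : ℕ} {w d : Polynomial Fq} (hd : Q ∣ P * w + d)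
    (s : Fin k → Polynomial Fq) :
    Q ^ (k + 1) ∣ NN P Q (k + 1) w (Fin.snoc s d) ↔
      Q ^ k ∣ NN P Q k ((P * w + d) / Q) s := by
  have hc : Q * ((P * w + d) / Q) = P * w + d := EuclideanDomain.mul_div_cancel' hQ hd
  rw [NN_snoc]
  have he : P ^ k * (P * w + d) + Q * ∑ i : Fin k, s i * (P ^ (i : ℕ) * Q ^ (k - 1 - (i : ℕ))) =
      Q * NN P Q k ((P * w + d) / Q) s := by
    unfold NN
    linear_combination (-(P ^ k) : Polynomial Fq) * hc
  rw [he, pow_succ']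
  exact mul_dvd_mul_iff_left hQ

lemma cond_digit (hQ : Q ≠ 0) (hcop : IsCoprime P Q) {k : ℕ} {w : Polynomial Fq}
    {s : Fin (k + 1) → Polynomial Fq} (h : Q ^ (k + 1) ∣ NN P Q (k + 1) w s) :
    Q ∣ P * w + s (Fin.last k) := by
  have h1 : Q ∣ NN P Q (k + 1) w s :=
    dvd_trans (dvd_pow_self Q (Nat.succ_ne_zero k)) h
  rw [← Fin.snoc_init_self s, NN_snoc] at h1
  have h2 : Q ∣ P ^ k * (P * w + s (Fin.last k)) := by
    have h3 := dvd_sub h1 (dvd_mul_right Q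
      (∑ i : Fin k, Fin.init s i * (P ^ (i : ℕ) * Q ^ (k - 1 - (i : ℕ)))))
    have he : P ^ k * (P * w + s (Fin.last k)) +
        Q * ∑ i : Fin k, Fin.init s i * (P ^ (i : ℕ) * Q ^ (k - 1 - (i : ℕ))) -
        Q * ∑ i : Fin k, Fin.init s i * (P ^ (i : ℕ) * Q ^ (k - 1 - (i : ℕ))) =
        P ^ k * (P * w + s (Fin.last k)) := by ring
    rwa [he] at h3
  have hcp : IsCoprime Q (P ^ k) := hcop.symm.pow_right
  rw [mul_comm] at h2
  exact hcp.dvd_of_dvd_mul_right h2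

noncomputable def solEquiv (hQ : Q ≠ 0) (hcop : IsCoprime P Q) (k : ℕ) (w : Polynomial Fq) :
    Sol P Q (k + 1) w ≃ Σ d : Dig P Q w, Sol P Q k ((P * w + d.1) / Q) := by
  refine
    { toFun := fun s =>
        ⟨⟨s.1 (Fin.last k), s.2.1 _, cond_digit hQ hcop s.2.2⟩,
          ⟨Fin.init s.1, fun i => s.2.1 _, ?_⟩⟩
      invFun := fun x =>
        ⟨Fin.snoc x.2.1 x.1.1, ?_, (cond_snoc hQ x.1.2.2 x.2.1).mpr x.2.2.2⟩
      left_inv := ?_, right_inv := ?_ }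
  · have hs := s.2.2
    rw [← Fin.snoc_init_self s.1] at hs
    exact (cond_snoc hQ (cond_digit hQ hcop s.2.2) (Fin.init s.1)).mp hs
  · intro i
    refine Fin.lastCases ?_ ?_ i
    · rw [Fin.snoc_last]; exact x.1.2.1
    · intro j; rw [Fin.snoc_castSucc]; exact x.2.2.1 j
  · intro s
    apply Subtype.ext
    exact Fin.snoc_init_self s.1
  · rintro ⟨⟨d, hd⟩, ⟨t, ht⟩⟩
    have h1 : (Fin.snoc t d : Fin (k + 1) → Polynomial Fq) (Fin.last k) = d :=
      Fin.snoc_last _ _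
    have h2 : Fin.init (Fin.snoc t d : Fin (k + 1) → Polynomial Fq) = t :=
      Fin.init_snoc _ _
    refine Sigma.ext (Subtype.ext h1) ?_
    refine (Subtype.heq_iff_coe_eq ?_).mpr h2
    intro x
    dsimp only
    rw [h1]

lemma key_mul (hQ : Q ≠ 0) (k : ℕ) (w : Polynomial Fq) (s : Fin k → Polynomial Fq) :
    (((algebraMap (Polynomial Fq) (RatFunc Fq) P) /
        (algebraMap (Polynomial Fq) (RatFunc Fq) Q)) ^ k *
          algebraMap (Polynomial Fq) (RatFunc Fq) w +
        ∑ i : Fin k,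
          (algebraMap (Polynomial Fq) (RatFunc Fq) (s i) /
            algebraMap (Polynomial Fq) (RatFunc Fq) Q) *
          ((algebraMap (Polynomial Fq) (RatFunc Fq) P) /
            (algebraMap (Polynomial Fq) (RatFunc Fq) Q)) ^ (i : ℕ)) *
      (algebraMap (Polynomial Fq) (RatFunc Fq) Q) ^ k =
    algebraMap (Polynomial Fq) (RatFunc Fq) (NN (P := P) (Q := Q) k w s) := by
  set a := algebraMap (Polynomial Fq) (RatFunc Fq) with ha
  have haQ : a Q ≠ 0 := by simp [ha, hQ]
  rw [NN, map_add, map_mul, map_pow, map_sum, add_mul, Finset.sum_mul]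
  congr 1
  · rw [div_pow]
    field_simp
  · refine Finset.sum_congr rfl fun i _ => ?_
    have hi := i.isLt
    rw [map_mul, map_mul, map_pow, map_pow]
    have hk : a Q ^ k = a Q ^ ((i : ℕ) + 1) * a Q ^ (k - 1 - (i : ℕ)) := by
      rw [← pow_add]; congr 1; omega
    rw [hk, div_pow, div_mul_div_comm, div_mul_eq_mul_div,
      div_eq_iff (mul_ne_zero haQ (pow_ne_zero _ haQ))]
    ring

lemma exists_iff (hQ : Q ≠ 0) (k : ℕ) (w : Polynomial Fq) (s : Fin k → Polynomial Fq) :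
    (∃ u : Polynomial Fq, algebraMap (Polynomial Fq) (RatFunc Fq) u =
        ((algebraMap (Polynomial Fq) (RatFunc Fq) P) /
          (algebraMap (Polynomial Fq) (RatFunc Fq) Q)) ^ k *
            algebraMap (Polynomial Fq) (RatFunc Fq) w +
          ∑ i : Fin k,
            (algebraMap (Polynomial Fq) (RatFunc Fq) (s i) /
              algebraMap (Polynomial Fq) (RatFunc Fq) Q) *
            ((algebraMap (Polynomial Fq) (RatFunc Fq) P) /
              (algebraMap (Polynomial Fq) (RatFunc Fq) Q)) ^ (i : ℕ)) ↔
      Q ^ k ∣ NN (P := P) (Q := Q) k w s := by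
  have hinj : Function.Injective (algebraMap (Polynomial Fq) (RatFunc Fq)) :=
    IsFractionRing.injective _ _
  have haQ : (algebraMap (Polynomial Fq) (RatFunc Fq)) Q ≠ 0 := by simp [hQ]
  have haQk : (algebraMap (Polynomial Fq) (RatFunc Fq)) Q ^ k ≠ 0 := pow_ne_zero _ haQ
  constructor
  · rintro ⟨u, hu⟩
    refine ⟨u, hinj ?_⟩
    rw [← key_mul hQ k w s, ← hu, map_mul, map_pow]
    ring
  · rintro ⟨u, hNu⟩
    refine ⟨u, mul_right_cancel₀ haQk ?_⟩
    rw [key_mul hQ k w s, hNu, map_mul, map_pow]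
    ring

lemma card_sol [Fintype Fq] (hP : P ≠ 0) (hQ : Q ≠ 0) (hcop : IsCoprime P Q)
    (hdeg : Q.degree < P.degree) :
    ∀ (k : ℕ) (w : Polynomial Fq),
      Nat.card (Sol P Q k w) = Fintype.card Fq ^ (k * (P.natDegree - Q.natDegree)) := by
  intro k
  induction k with
  | zero =>
    intro w
    have e : Sol P Q 0 w ≃ PUnit.{1} :=
      { toFun := fun _ => PUnit.unit
        invFun := fun _ => ⟨fun i => i.elim0, fun i => i.elim0, by simp [NN]⟩
        left_inv := fun s => Subtype.ext (funext fun i => i.elim0)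
        right_inv := fun _ => rfl }
    rw [Nat.card_congr e]
    simp
  | succ k ih =>
    intro w
    haveI hfin : ∀ w' : Polynomial Fq, Finite (Sol P Q k w') := fun w' => finite_sol hP k w'
    have E2 : (Σ d : Dig P Q w, Sol P Q k ((P * w + d.1) / Q)) ≃
        Dig P Q w × Fin (Fintype.card Fq ^ (k * (P.natDegree - Q.natDegree))) :=
      (Equiv.sigmaCongrRight fun d => Finite.equivFinOfCardEq (ih _)).trans
        (Equiv.sigmaEquivProd _ _)
    rw [Nat.card_congr ((solEquiv hQ hcop k w).trans E2), Nat.card_prod,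
      Nat.card_eq_fintype_card (α := Fin _), Fintype.card_fin]
    have hD : Nat.card (Dig P Q w) = Fintype.card Fq ^ (P.natDegree - Q.natDegree) := by
      rw [← Nat.card_congr (digEquiv hQ hdeg w), card_degreeLT]
    rw [hD, ← pow_add]
    congr 1
    ring

lemma nonempty_sol [Fintype Fq] (hP : P ≠ 0) (hQ : Q ≠ 0) (hcop : IsCoprime P Q)
    (hdeg : Q.degree < P.degree) (k : ℕ) (w : Polynomial Fq) :
    Nonempty (Sol P Q k w) := by
  by_contra h
  haveI : IsEmpty (Sol P Q k w) := not_nonempty_iff.mp h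
  have h0 : Nat.card (Sol P Q k w) = 0 := Nat.card_of_isEmpty
  rw [card_sol hP hQ hcop hdeg k w] at h0
  exact (pow_ne_zero _ (Fintype.card_pos (α := Fq)).ne') h0

end
end PQCont

/-- **Theorem (number of length-`k` continuations).** For `w ∈ F_q[X]` and `k ∈ ℕ`,
let `R_k(w)` be the set of length-`k` digit strings `s` (digits of degree `< deg P`)
such that `(P/Q)^k·w + ∑_{i<k}(s_i/Q)(P/Q)^i` is a polynomial. Then `R_k(w)` is
nonempty and has exactly `q^(k·(deg P - deg Q))` elements. -/
theorem pq_continuation_count (Fq : Type*) [Field Fq] [Fintype Fq]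
    (P Q : Polynomial Fq) (hP : P ≠ 0) (hQ : Q ≠ 0) (hcop : IsCoprime P Q)
    (hdeg : Q.degree < P.degree) (hQdeg : 1 ≤ Q.degree)
    (w : Polynomial Fq) (k : ℕ) :
    Nonempty {s : Fin k → Polynomial Fq //
        (∀ i, (s i).degree < P.degree) ∧
        ∃ u : Polynomial Fq, algebraMap (Polynomial Fq) (RatFunc Fq) u =
          ((algebraMap (Polynomial Fq) (RatFunc Fq) P) /
            (algebraMap (Polynomial Fq) (RatFunc Fq) Q)) ^ k *
              algebraMap (Polynomial Fq) (RatFunc Fq) w +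
            ∑ i : Fin k,
              (algebraMap (Polynomial Fq) (RatFunc Fq) (s i) /
                algebraMap (Polynomial Fq) (RatFunc Fq) Q) *
              ((algebraMap (Polynomial Fq) (RatFunc Fq) P) /
                (algebraMap (Polynomial Fq) (RatFunc Fq) Q)) ^ (i : ℕ)} ∧
    Nat.card {s : Fin k → Polynomial Fq //
        (∀ i, (s i).degree < P.degree) ∧
        ∃ u : Polynomial Fq, algebraMap (Polynomial Fq) (RatFunc Fq) u =
          ((algebraMap (Polynomial Fq) (RatFunc Fq) P) /
            (algebraMap (Polynomial Fq) (RatFunc Fq) Q)) ^ k *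
              algebraMap (Polynomial Fq) (RatFunc Fq) w +
            ∑ i : Fin k,
              (algebraMap (Polynomial Fq) (RatFunc Fq) (s i) /
                algebraMap (Polynomial Fq) (RatFunc Fq) Q) *
              ((algebraMap (Polynomial Fq) (RatFunc Fq) P) /
                (algebraMap (Polynomial Fq) (RatFunc Fq) Q)) ^ (i : ℕ)} =
      (Fintype.card Fq) ^ (k * (P.natDegree - Q.natDegree)) := by
  classical
  have e : {s : Fin k → Polynomial Fq //
      (∀ i, (s i).degree < P.degree) ∧
      ∃ u : Polynomial Fq, algebraMap (Polynomial Fq) (RatFunc Fq) u =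
        ((algebraMap (Polynomial Fq) (RatFunc Fq) P) /
          (algebraMap (Polynomial Fq) (RatFunc Fq) Q)) ^ k *
            algebraMap (Polynomial Fq) (RatFunc Fq) w +
          ∑ i : Fin k,
            (algebraMap (Polynomial Fq) (RatFunc Fq) (s i) /
              algebraMap (Polynomial Fq) (RatFunc Fq) Q) *
            ((algebraMap (Polynomial Fq) (RatFunc Fq) P) /
              (algebraMap (Polynomial Fq) (RatFunc Fq) Q)) ^ (i : ℕ)} ≃
      PQCont.Sol P Q k w :=
    Equiv.subtypeEquivRight fun s =>
      and_congr_right fun _ => PQCont.exists_iff hQ k w s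
  constructor
  · exact e.nonempty_congr.mpr (PQCont.nonempty_sol hP hQ hcop hdeg k w)
  · rw [Nat.card_congr e]
    exact PQCont.card_sol hP hQ hcop hdeg k w
end
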